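/- Let r ≥ 1, let f : ℝ → ℝ be twice continuously differentiable, and define ℓ(u, v) := f(⟨u, v⟩) for u, v ∈ ℝ^r, where ⟨·,·⟩ is the Euclidean inner product. Suppose t ↦ (u(t), v(t)) is a differentiable curve on [0,T) following the gradient flow (u'(t), v'(t)) = −∇ℓ(u(t), v(t)), and set S := u(0) u(0)^⊤ − v(0) v(0)^⊤ ∈ ℝ^{r×r} and z(t) := ⟨u(t), v(t)⟩. Then for all t ∈ [0,T): z'(t) = −√(2 tr(S²) − tr(S)² + 4 z(t)²) · f'(z(t)); in particular 2 tr(S²) − tr(S)² + 4 z(t)² = (‖u(t)‖² + ‖v(t)‖²)² ≥ 0 along the trajectory. -/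

import Mathlib

open Matrix

lemma trace_vecMulVec_mul {r : ℕ} (x y a b : Fin r → ℝ) :
    (vecMulVec x y * vecMulVec a b).trace = (∑ i, y i * a i) * (∑ i, b i * x i) := by
  simp only [Matrix.trace, Matrix.mul_apply, Matrix.vecMulVec_apply, Matrix.diag,
    Finset.sum_mul_sum]
  rw [Finset.sum_comm]
  exact Finset.sum_congr rfl fun i _ => Finset.sum_congr rfl fun j _ => by ring

lemma inner_eq_sum {r : ℕ} (x y : EuclideanSpace ℝ (Fin r)) :
    (inner ℝ x y : ℝ) = ∑ i, x i * y i := by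
  simp [PiLp.inner_apply, RCLike.inner_apply, mul_comm]

/-- For the two-layer scalar linear network `ℓ(u,v) = f(⟨u,v⟩)`, along the
gradient flow (`u' = −f'(⟨u,v⟩) v`, `v' = −f'(⟨u,v⟩) u`), setting
`S := u(0) u(0)ᵀ − v(0) v(0)ᵀ` and `z := ⟨u,v⟩`, one has
`z' = −√(2 tr(S²) − tr(S)² + 4 z²) · f'(z)`, and
`2 tr(S²) − tr(S)² + 4 z² = (‖u‖² + ‖v‖²)² ≥ 0` along the trajectory. -/
theorem scalar_two_layer_intrinsic_dynamics
    (r : ℕ) (hr : 1 ≤ r)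
    (f : ℝ → ℝ) (hf : ContDiff ℝ 2 f)
    (T : ℝ) (hT : 0 < T)
    (u v : ℝ → EuclideanSpace ℝ (Fin r))
    (hu : ∀ t ∈ Set.Ico (0 : ℝ) T,
      HasDerivWithinAt u (-(deriv f (inner ℝ (u t) (v t) : ℝ)) • v t) (Set.Ico (0 : ℝ) T) t)
    (hv : ∀ t ∈ Set.Ico (0 : ℝ) T,
      HasDerivWithinAt v (-(deriv f (inner ℝ (u t) (v t) : ℝ)) • u t) (Set.Ico (0 : ℝ) T) t) :
    ∀ t ∈ Set.Ico (0 : ℝ) T,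
      (HasDerivWithinAt (fun s => (inner ℝ (u s) (v s) : ℝ))
        (-Real.sqrt
            (2 * ((vecMulVec (u 0) (u 0) - vecMulVec (v 0) (v 0)) *
                (vecMulVec (u 0) (u 0) - vecMulVec (v 0) (v 0))).trace -
              ((vecMulVec (u 0) (u 0) - vecMulVec (v 0) (v 0)).trace) ^ 2 +
              4 * (inner ℝ (u t) (v t) : ℝ) ^ 2) *
          deriv f (inner ℝ (u t) (v t) : ℝ))
        (Set.Ico (0 : ℝ) T) t) ∧
      2 * ((vecMulVec (u 0) (u 0) - vecMulVec (v 0) (v 0)) *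
            (vecMulVec (u 0) (u 0) - vecMulVec (v 0) (v 0))).trace -
          ((vecMulVec (u 0) (u 0) - vecMulVec (v 0) (v 0)).trace) ^ 2 +
          4 * (inner ℝ (u t) (v t) : ℝ) ^ 2 =
        (‖u t‖ ^ 2 + ‖v t‖ ^ 2) ^ 2 := by
  set s : Set ℝ := Set.Ico (0 : ℝ) T with hs
  have h0 : (0 : ℝ) ∈ s := ⟨le_refl 0, hT⟩
  set S : Matrix (Fin r) (Fin r) ℝ :=
    vecMulVec (u 0) (u 0) - vecMulVec (v 0) (v 0) with hS
  -- norm-squared as sum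
  have hsum_self : ∀ x : EuclideanSpace ℝ (Fin r), (∑ i, x i * x i) = ‖x‖ ^ 2 := by
    intro x
    rw [← real_inner_self_eq_norm_sq, inner_eq_sum]
  -- trace identity
  have htr : 2 * (S * S).trace - S.trace ^ 2 =
      (‖u 0‖ ^ 2 + ‖v 0‖ ^ 2) ^ 2 - 4 * (inner ℝ (u 0) (v 0) : ℝ) ^ 2 := by
    have hSS : S * S = vecMulVec (u 0) (u 0) * vecMulVec (u 0) (u 0)
        - vecMulVec (u 0) (u 0) * vecMulVec (v 0) (v 0)
        - (vecMulVec (v 0) (v 0) * vecMulVec (u 0) (u 0)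
            - vecMulVec (v 0) (v 0) * vecMulVec (v 0) (v 0)) := by
      rw [hS]; noncomm_ring
    have htrS : S.trace = ‖u 0‖ ^ 2 - ‖v 0‖ ^ 2 := by
      rw [hS, Matrix.trace_sub]
      simp only [Matrix.trace, Matrix.diag, Matrix.vecMulVec_apply]
      rw [hsum_self, hsum_self]
    have huv : (∑ i, (u 0) i * (v 0) i) = (inner ℝ (u 0) (v 0) : ℝ) :=
      (inner_eq_sum _ _).symm
    have hvu : (∑ i, (v 0) i * (u 0) i) = (inner ℝ (u 0) (v 0) : ℝ) := by
      rw [← huv]; exact Finset.sum_congr rfl fun i _ => mul_comm _ _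
    rw [hSS, Matrix.trace_sub, Matrix.trace_sub, Matrix.trace_sub,
      trace_vecMulVec_mul, trace_vecMulVec_mul, trace_vecMulVec_mul, trace_vecMulVec_mul,
      huv, hvu, hsum_self, hsum_self, htrS]
    ring
  -- derivative of z
  have hz : ∀ t ∈ s, HasDerivWithinAt (fun w => (inner ℝ (u w) (v w) : ℝ))
      (-((‖u t‖ ^ 2 + ‖v t‖ ^ 2) * deriv f (inner ℝ (u t) (v t) : ℝ))) s t := by
    intro t ht
    have h := (hu t ht).inner ℝ (hv t ht)
    convert h using 1
    any_goals rfl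
    rw [real_inner_smul_right, real_inner_smul_left, real_inner_self_eq_norm_sq,
      real_inner_self_eq_norm_sq]
    ring
  -- derivative of ‖u‖² + ‖v‖²
  have hg : ∀ t ∈ s, HasDerivWithinAt (fun w => ‖u w‖ ^ 2 + ‖v w‖ ^ 2)
      (-(4 * (inner ℝ (u t) (v t) : ℝ) * deriv f (inner ℝ (u t) (v t) : ℝ))) s t := by
    intro t ht
    have h1 := (hu t ht).inner ℝ (hu t ht)
    have h2 := (hv t ht).inner ℝ (hv t ht)
    have h := h1.add h2
    simp only [← real_inner_self_eq_norm_sq]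
    convert h using 1
    any_goals rfl
    rw [real_inner_smul_right, real_inner_smul_left, real_inner_smul_right,
      real_inner_smul_left, real_inner_comm (u t) (v t)]
    ring
  -- the conserved quantity
  set Q : ℝ → ℝ :=
    fun w => (‖u w‖ ^ 2 + ‖v w‖ ^ 2) ^ 2 - 4 * (inner ℝ (u w) (v w) : ℝ) ^ 2 with hQdef
  have hQ : ∀ t ∈ s, HasDerivWithinAt Q 0 s t := by
    intro t ht
    have h1 := (hg t ht).pow 2
    have h2 := ((hz t ht).pow 2).const_mul (4 : ℝ)
    have h := h1.sub h2
    convert h using 1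
    any_goals rfl
    push_cast
    ring
  have hQconst : ∀ t ∈ s, Q t = Q 0 := by
    intro t ht
    have hconv : Convex ℝ s := convex_Ico 0 T
    have hdiff : DifferentiableOn ℝ Q s := fun w hw => (hQ w hw).differentiableWithinAt
    have hfd : ∀ w ∈ s, fderivWithin ℝ Q s w = 0 := by
      intro w hw
      have := (hQ w hw).hasFDerivWithinAt.fderivWithin (uniqueDiffOn_Ico 0 T w hw)
      rw [this]
      apply ContinuousLinearMap.ext
      intro x
      simp
    exact hconv.is_const_of_fderivWithin_eq_zero hdiff hfd ht h0
  -- main conclusion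
  intro t ht
  have hkey : 2 * (S * S).trace - S.trace ^ 2 + 4 * (inner ℝ (u t) (v t) : ℝ) ^ 2 =
      (‖u t‖ ^ 2 + ‖v t‖ ^ 2) ^ 2 := by
    have h1 := hQconst t ht
    rw [hQdef] at h1
    simp only at h1
    rw [htr]
    linarith
  refine ⟨?_, hkey⟩
  rw [hkey, Real.sqrt_sq (by positivity)]
  have h := hz t ht
  convert h using 1
  ring
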